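/- Covariance bound for secondary fields (Corollary 2.7, deterministic kernel form): Fix M > 1, β < 1, an integer r ≥ 0, A > 0, and integers j ≤ k, j ≤ k'. Let C : ℝ × ℝ → ℝ have a continuous mixed second partial derivative satisfying |∂_v ∂_w C(v,w)| ≤ A · M^{(2−2β)j} / (1 + M^{j}|v−w|)^{r} for all v,w ∈ ℝ. For x ∈ ℝ let Δ^k_x := [⌊M^k x⌋ M^{−k}, (⌊M^k x⌋+1) M^{−k}] be the M-adic interval of scale k containing x, and define the doubly averaged-difference kernel (δ^k ⊗ δ^{k'} C)(x,y) := C(x,y) − M^{k}∫_{Δ^k_x} C(u,y) du − M^{k'}∫_{Δ^{k'}_y} C(x,w) dw + M^{k+k'} ∫_{Δ^k_x} ∫_{Δ^{k'}_y} C(u,w) du dw. Then there is a constant K' depending only on A, r and M (not on j, k, k', x, y or C) such that |(δ^k ⊗ δ^{k'} C)(x,y)| ≤ K' · M^{−2βj} · M^{−(k−j)} · M^{−(k'−j)} / (1 + M^{j}|x−y|)^{r}. -/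

import Mathlib

open MeasureTheory

/-- The `M`-adic interval of scale `k` containing `x`:
`Δ^k_x = [⌊M^k x⌋ M^{−k}, (⌊M^k x⌋ + 1) M^{−k}]`. -/
noncomputable def madicInterval (M : ℝ) (k : ℤ) (x : ℝ) : Set ℝ :=
  Set.Icc ((⌊M ^ (k : ℝ) * x⌋ : ℝ) * M ^ (-(k : ℝ)))
    (((⌊M ^ (k : ℝ) * x⌋ : ℝ) + 1) * M ^ (-(k : ℝ)))

/-- The doubly averaged-difference kernel
`(δ^k ⊗ δ^{k'} C)(x,y) = C(x,y) − M^k ∫_{Δ^k_x} C(u,y) du − M^{k'} ∫_{Δ^{k'}_y} C(x,w) dw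
  + M^{k+k'} ∫_{Δ^k_x} ∫_{Δ^{k'}_y} C(u,w) du dw`. -/
noncomputable def doubleAvgDiff (M : ℝ) (k k' : ℤ) (C : ℝ → ℝ → ℝ) (x y : ℝ) : ℝ :=
  C x y - M ^ (k : ℝ) * (∫ u in madicInterval M k x, C u y)
    - M ^ (k' : ℝ) * (∫ w in madicInterval M k' y, C x w)
    + M ^ ((k : ℝ) + (k' : ℝ)) *
        (∫ u in madicInterval M k x, ∫ w in madicInterval M k' y, C u w)

open Set

lemma madic_eq (M : ℝ) (k : ℤ) (x : ℝ) :
    madicInterval M k x = Icc ((⌊M ^ (k : ℝ) * x⌋ : ℝ) * M ^ (-(k : ℝ)))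
      (((⌊M ^ (k : ℝ) * x⌋ : ℝ) + 1) * M ^ (-(k : ℝ))) := rfl

lemma mem_madicInterval {M : ℝ} (hM : 0 < M) (k : ℤ) (x : ℝ) :
    x ∈ madicInterval M k x := by
  have hP : (0:ℝ) < M ^ (k:ℝ) := Real.rpow_pos_of_pos hM _
  have h1 : (⌊M ^ (k:ℝ) * x⌋ : ℝ) ≤ M ^ (k:ℝ) * x := Int.floor_le _
  have h2 : M ^ (k:ℝ) * x ≤ (⌊M ^ (k:ℝ) * x⌋ : ℝ) + 1 := (Int.lt_floor_add_one _).le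
  constructor <;> rw [Real.rpow_neg hM.le, ← div_eq_mul_inv]
  · rw [div_le_iff₀ hP]; nlinarith
  · rw [le_div_iff₀ hP]; nlinarith

lemma madic_diam {M : ℝ} (hM : 0 < M) (k : ℤ) (x : ℝ) {v v' : ℝ}
    (h : v ∈ madicInterval M k x) (h' : v' ∈ madicInterval M k x) :
    |v - v'| ≤ M ^ (-(k:ℝ)) := by
  obtain ⟨a1, a2⟩ := h; obtain ⟨b1, b2⟩ := h'
  rw [abs_sub_le_iff]
  constructor <;> nlinarith

lemma decomp (C : ℝ → ℝ → ℝ) (hC : Continuous fun p : ℝ × ℝ => C p.1 p.2)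
    (x y a b c d : ℝ) (hcd : c ≤ d) :
    ∫ u in Icc a b, ∫ w in Icc c d, (C x y - C u y - C x w + C u w)
      = (volume (Icc a b)).toReal * ((volume (Icc c d)).toReal * C x y)
        - (volume (Icc c d)).toReal * (∫ u in Icc a b, C u y)
        - (volume (Icc a b)).toReal * (∫ w in Icc c d, C x w)
        + ∫ u in Icc a b, ∫ w in Icc c d, C u w := by
  have hCx : ∀ z : ℝ, Continuous (fun w => C z w) := fun z =>
    hC.comp (Continuous.prodMk_right z)
  have hCy : ∀ z : ℝ, Continuous (fun u => C u z) := fun z =>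
    hC.comp (continuous_id.prodMk continuous_const)
  set Vab := (volume (Icc a b)).toReal
  set Vcd := (volume (Icc c d)).toReal
  set Ix : ℝ := ∫ w in Icc c d, C x w with hIxdef
  set J : ℝ → ℝ := fun u => ∫ w in Icc c d, C u w with hJdef
  have hJcont : Continuous J := by
    have h1 : ∀ u : ℝ, J u = ∫ w in c..d, C u w := fun u => by
      rw [intervalIntegral.integral_of_le hcd]
      exact integral_Icc_eq_integral_Ioc
    rw [show J = fun u => ∫ w in c..d, C u w from funext h1]
    exact intervalIntegral.continuous_parametric_intervalIntegral_of_continuous' hC c d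
  have hconst : ∀ (s : Set ℝ) (c' : ℝ), s = Icc a b ∨ s = Icc c d →
      IntegrableOn (fun _ : ℝ => c') s volume := by
    rintro s c' (rfl | rfl) <;> exact integrableOn_const measure_Icc_lt_top.ne
  have hinner : ∀ u : ℝ, (∫ w in Icc c d, (C x y - C u y - C x w + C u w))
      = Vcd * (C x y - C u y) - Ix + J u := by
    intro u
    have hI1 : IntegrableOn (fun w : ℝ => (C x y - C u y) - C x w) (Icc c d) volume :=
      (hconst _ _ (Or.inr rfl)).sub ((hCx x).integrableOn_Icc)
    have hI2 : IntegrableOn (fun w : ℝ => C u w) (Icc c d) volume :=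
      (hCx u).integrableOn_Icc
    calc (∫ w in Icc c d, (C x y - C u y - C x w + C u w))
        = (∫ w in Icc c d, ((C x y - C u y) - C x w)) + ∫ w in Icc c d, C u w :=
          integral_add hI1 hI2
      _ = ((∫ _ in Icc c d, (C x y - C u y)) - ∫ w in Icc c d, C x w) + J u := by
          rw [integral_sub (hconst _ _ (Or.inr rfl)) ((hCx x).integrableOn_Icc)]
      _ = Vcd * (C x y - C u y) - Ix + J u := by
          rw [setIntegral_const, smul_eq_mul]; rfl
  have hA : IntegrableOn (fun u : ℝ => Vcd * (C x y - C u y) - Ix) (Icc a b) volume :=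
    ((continuous_const.mul (continuous_const.sub (hCy y))).integrableOn_Icc).sub
      (hconst _ _ (Or.inl rfl))
  calc ∫ u in Icc a b, ∫ w in Icc c d, (C x y - C u y - C x w + C u w)
      = ∫ u in Icc a b, (Vcd * (C x y - C u y) - Ix + J u) := by
        exact setIntegral_congr_fun measurableSet_Icc (fun u _ => hinner u)
    _ = (∫ u in Icc a b, (Vcd * (C x y - C u y) - Ix)) + ∫ u in Icc a b, J u :=
        integral_add hA (hJcont.integrableOn_Icc)
    _ = ((∫ u in Icc a b, Vcd * (C x y - C u y)) - ∫ _ in Icc a b, Ix) + ∫ u in Icc a b, J u := by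
        rw [integral_sub (f := fun u => Vcd * (C x y - C u y)) (continuous_const.mul (continuous_const.sub (hCy y))).integrableOn_Icc
          (hconst _ _ (Or.inl rfl))]
    _ = (Vcd * (∫ u in Icc a b, (C x y - C u y)) - Vab * Ix) + ∫ u in Icc a b, J u := by
        rw [integral_const_mul, setIntegral_const, smul_eq_mul]; rfl
    _ = (Vcd * ((∫ _ in Icc a b, C x y) - ∫ u in Icc a b, C u y) - Vab * Ix)
          + ∫ u in Icc a b, J u := by
        rw [integral_sub (hconst _ _ (Or.inl rfl)) ((hCy y).integrableOn_Icc)]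
    _ = (Vcd * (Vab * C x y - ∫ u in Icc a b, C u y) - Vab * Ix) + ∫ u in Icc a b, J u := by
        rw [setIntegral_const, smul_eq_mul]; rfl
    _ = Vab * (Vcd * C x y)
        - Vcd * (∫ u in Icc a b, C u y)
        - Vab * (∫ w in Icc c d, C x w)
        + ∫ u in Icc a b, ∫ w in Icc c d, C u w := by
        have hB : (∫ u in Icc a b, J u) = ∫ u in Icc a b, ∫ w in Icc c d, C u w := rfl
        rw [hB, hIxdef]; ring

/-- **Covariance bound for secondary fields** (Corollary 2.7, deterministic kernel form): fix
`M > 1`, an integer `r ≥ 0` and `A > 0`. There is a constant `K' > 0` depending only on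
`A, r, M` such that for every `β < 1`, all integers `j ≤ k`, `j ≤ k'`, and every kernel
`C : ℝ × ℝ → ℝ` with continuous mixed second partial derivative `g = ∂_v ∂_w C` satisfying
`|g(v,w)| ≤ A M^{(2−2β)j}/(1+M^j|v−w|)^r`, one has
`|(δ^k ⊗ δ^{k'} C)(x,y)| ≤ K' M^{−2βj} M^{−(k−j)} M^{−(k'−j)} / (1+M^j|x−y|)^r`. -/
theorem secondary_field_covariance_bound (M : ℝ) (hM : 1 < M) (r : ℕ)
    (A : ℝ) (hA : 0 < A) :
    ∃ K' : ℝ, 0 < K' ∧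
      ∀ (β : ℝ), β < 1 →
      ∀ (j k k' : ℤ), j ≤ k → j ≤ k' →
      ∀ (C Cw g : ℝ → ℝ → ℝ),
        Continuous (fun p : ℝ × ℝ => C p.1 p.2) →
        (∀ v w : ℝ, HasDerivAt (fun w' => C v w') (Cw v w) w) →
        (∀ v w : ℝ, HasDerivAt (fun v' => Cw v' w) (g v w) v) →
        Continuous (fun p : ℝ × ℝ => g p.1 p.2) →
        (∀ v w : ℝ,
          |g v w| ≤ A * M ^ ((2 - 2 * β) * (j : ℝ)) / (1 + M ^ (j : ℝ) * |v - w|) ^ r) →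
        ∀ x y : ℝ,
          |doubleAvgDiff M k k' C x y|
            ≤ K' * M ^ (-2 * β * (j : ℝ)) * M ^ (-((k : ℝ) - (j : ℝ)))
                * M ^ (-((k' : ℝ) - (j : ℝ))) / (1 + M ^ (j : ℝ) * |x - y|) ^ r := by
  refine ⟨A * 3 ^ r, by positivity, ?_⟩
  intro β hβ j k k' hjk hjk' C Cw g hC hCw hgd hgcont hgb x y
  have hM0 : (0:ℝ) < M := lt_trans one_pos hM
  -- notation
  set mk : ℝ := M ^ (-(k:ℝ)) with hmk
  set mk' : ℝ := M ^ (-(k':ℝ)) with hmk'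
  have hmk0 : 0 < mk := Real.rpow_pos_of_pos hM0 _
  have hmk'0 : 0 < mk' := Real.rpow_pos_of_pos hM0 _
  set s : ℝ := 1 + M ^ (j:ℝ) * |x - y| with hs
  have hs0 : (0:ℝ) < s := by
    have : 0 ≤ M ^ (j:ℝ) * |x - y| := by positivity
    linarith
  set B : ℝ := A * M ^ ((2 - 2*β) * (j:ℝ)) * 3 ^ r / s ^ r with hBdef
  have hB0 : 0 ≤ B := by positivity
  -- the intervals
  set a : ℝ := (⌊M ^ (k : ℝ) * x⌋ : ℝ) * M ^ (-(k : ℝ)) with ha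
  set b : ℝ := ((⌊M ^ (k : ℝ) * x⌋ : ℝ) + 1) * M ^ (-(k : ℝ)) with hb
  set c : ℝ := (⌊M ^ (k' : ℝ) * y⌋ : ℝ) * M ^ (-(k' : ℝ)) with hc
  set d : ℝ := ((⌊M ^ (k' : ℝ) * y⌋ : ℝ) + 1) * M ^ (-(k' : ℝ)) with hd
  have hΔ : madicInterval M k x = Icc a b := rfl
  have hΔ' : madicInterval M k' y = Icc c d := rfl
  have hba : b - a = mk := by rw [ha, hb, hmk]; ring
  have hdc : d - c = mk' := by rw [hc, hd, hmk']; ring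
  have hab : a ≤ b := by nlinarith
  have hcd : c ≤ d := by nlinarith
  have hxab : x ∈ Icc a b := mem_madicInterval hM0 k x
  have hycd : y ∈ Icc c d := mem_madicInterval hM0 k' y
  have hVab : (volume (Icc a b)).toReal = mk := by
    rw [Real.volume_Icc, hba, ENNReal.toReal_ofReal hmk0.le]
  have hVcd : (volume (Icc c d)).toReal = mk' := by
    rw [Real.volume_Icc, hdc, ENNReal.toReal_ofReal hmk'0.le]
  -- spring factors
  have hjk1 : M ^ (j:ℝ) * mk ≤ 1 := by
    rw [hmk, ← Real.rpow_add hM0]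
    have : (j:ℝ) + -(k:ℝ) ≤ 0 := by
      have : (j:ℝ) ≤ (k:ℝ) := by exact_mod_cast hjk
      linarith
    calc M ^ ((j:ℝ) + -(k:ℝ)) ≤ M ^ (0:ℝ) :=
          Real.rpow_le_rpow_of_exponent_le hM.le (by linarith)
      _ = 1 := Real.rpow_zero M
  have hjk'1 : M ^ (j:ℝ) * mk' ≤ 1 := by
    rw [hmk', ← Real.rpow_add hM0]
    have : (j:ℝ) ≤ (k':ℝ) := by exact_mod_cast hjk'
    calc M ^ ((j:ℝ) + -(k':ℝ)) ≤ M ^ (0:ℝ) :=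
          Real.rpow_le_rpow_of_exponent_le hM.le (by linarith)
      _ = 1 := Real.rpow_zero M
  -- pointwise bound on g over the rectangle
  have hgB : ∀ v ∈ Icc a b, ∀ t ∈ Icc c d, |g v t| ≤ B := by
    intro v hv t ht
    have h1 : |x - v| ≤ mk := madic_diam hM0 k x hxab hv
    have h2 : |t - y| ≤ mk' := madic_diam hM0 k' y ht hycd
    have hMj : (0:ℝ) < M ^ (j:ℝ) := Real.rpow_pos_of_pos hM0 _
    have htri : |x - y| ≤ |x - v| + |v - t| + |t - y| := by
      calc |x - y| = |(x - v) + (v - t) + (t - y)| := by ring_nf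
        _ ≤ |x - v| + |v - t| + |t - y| := by
            exact (abs_add_le _ _).trans (add_le_add_left (abs_add_le _ _) _)
    have hkey : s ≤ 3 * (1 + M ^ (j:ℝ) * |v - t|) := by
      rw [hs]
      nlinarith [mul_le_mul_of_nonneg_left htri hMj.le,
        mul_le_mul_of_nonneg_left h1 hMj.le, mul_le_mul_of_nonneg_left h2 hMj.le,
        hjk1, hjk'1, abs_nonneg (v - t), hMj.le]
    have hvt0 : (0:ℝ) < 1 + M ^ (j:ℝ) * |v - t| := by positivity
    have hpow : s ^ r ≤ 3 ^ r * (1 + M ^ (j:ℝ) * |v - t|) ^ r := by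
      calc s ^ r ≤ (3 * (1 + M ^ (j:ℝ) * |v - t|)) ^ r := pow_le_pow_left₀ hs0.le hkey r
        _ = 3 ^ r * (1 + M ^ (j:ℝ) * |v - t|) ^ r := mul_pow _ _ _
    calc |g v t| ≤ A * M ^ ((2 - 2*β) * (j:ℝ)) / (1 + M ^ (j:ℝ) * |v - t|) ^ r := hgb v t
      _ ≤ B := by
          rw [hBdef, div_le_div_iff₀ (by positivity) (by positivity)]
          have hAM : (0:ℝ) ≤ A * M ^ ((2 - 2*β) * (j:ℝ)) := by positivity
          calc A * M ^ ((2 - 2*β) * (j:ℝ)) * s ^ r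
              ≤ A * M ^ ((2 - 2*β) * (j:ℝ)) * (3 ^ r * (1 + M ^ (j:ℝ) * |v - t|) ^ r) :=
                mul_le_mul_of_nonneg_left hpow hAM
            _ = A * M ^ ((2 - 2*β) * (j:ℝ)) * 3 ^ r * (1 + M ^ (j:ℝ) * |v - t|) ^ r := by ring
  -- representation of the second difference via the mixed derivative
  have hgcv : ∀ t : ℝ, Continuous fun v => g v t := fun t =>
    hgcont.comp (continuous_id.prodMk continuous_const)
  have hrep : ∀ u t : ℝ, (∫ v in u..x, g v t) = Cw x t - Cw u t := fun u t =>
    intervalIntegral.integral_eq_sub_of_hasDerivAt (fun v _ => hgd v t)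
      (((hgcv t).intervalIntegrable _ _))
  have hcont2 : ∀ u : ℝ, Continuous fun t => ∫ v in u..x, g v t := by
    intro u
    exact intervalIntegral.continuous_parametric_intervalIntegral_of_continuous'
      (f := fun t v => g v t)
      (hgcont.comp (continuous_snd.prodMk continuous_fst)) u x
  have hFrep : ∀ u w : ℝ, C x y - C u y - C x w + C u w
      = ∫ t in w..y, (∫ v in u..x, g v t) := by
    intro u w
    have h1 : ∀ t ∈ uIcc w y, HasDerivAt (fun t' => C x t' - C u t') (Cw x t - Cw u t) t :=
      fun t _ => (hCw x t).sub (hCw u t)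
    have h2 : IntervalIntegrable (fun t => Cw x t - Cw u t) volume w y := by
      have he : (fun t => Cw x t - Cw u t) = fun t => ∫ v in u..x, g v t :=
        funext fun t => (hrep u t).symm
      rw [he]; exact (hcont2 u).intervalIntegrable _ _
    have h3 := intervalIntegral.integral_eq_sub_of_hasDerivAt h1 h2
    have h4 : (∫ t in w..y, (∫ v in u..x, g v t)) = ∫ t in w..y, (Cw x t - Cw u t) := by
      simp_rw [hrep]
    rw [h4, h3]; ring
  -- pointwise bound on the second difference
  have hFbd : ∀ u ∈ Icc a b, ∀ w ∈ Icc c d,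
      |C x y - C u y - C x w + C u w| ≤ B * mk * mk' := by
    intro u hu w hw
    rw [hFrep u w]
    have hinner : ∀ t ∈ uIoc w y, ‖∫ v in u..x, g v t‖ ≤ B * mk := by
      intro t ht
      have ht' : t ∈ Icc c d :=
        ordConnected_Icc.uIcc_subset hw hycd (Ioc_subset_Icc_self ht)
      have h5 : ‖∫ v in u..x, g v t‖ ≤ B * |x - u| := by
        apply intervalIntegral.norm_integral_le_of_norm_le_const
        intro v hv
        have hv' : v ∈ Icc a b :=
          ordConnected_Icc.uIcc_subset hu hxab (Ioc_subset_Icc_self hv)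
        rw [Real.norm_eq_abs]
        exact hgB v hv' t ht'
      refine h5.trans ?_
      have : |x - u| ≤ mk := madic_diam hM0 k x hxab hu
      exact mul_le_mul_of_nonneg_left this hB0
    have h6 : ‖∫ t in w..y, (∫ v in u..x, g v t)‖ ≤ (B * mk) * |y - w| :=
      intervalIntegral.norm_integral_le_of_norm_le_const hinner
    rw [Real.norm_eq_abs] at h6
    refine h6.trans ?_
    have h7 : |y - w| ≤ mk' := madic_diam hM0 k' y hycd hw
    calc (B * mk) * |y - w| ≤ (B * mk) * mk' :=
        mul_le_mul_of_nonneg_left h7 (by positivity)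
      _ = B * mk * mk' := by ring
  -- rewrite doubleAvgDiff via decomp
  have hdec := decomp C hC x y a b c d hcd
  have hsplit : doubleAvgDiff M k k' C x y
      = M ^ ((k:ℝ) + (k':ℝ)) * ∫ u in Icc a b, ∫ w in Icc c d,
          (C x y - C u y - C x w + C u w) := by
    rw [hdec, hVab, hVcd]
    rw [doubleAvgDiff, hΔ, hΔ']
    have e1 : M ^ ((k:ℝ) + (k':ℝ)) = M ^ (k:ℝ) * M ^ (k':ℝ) := Real.rpow_add hM0 _ _
    have e2 : M ^ (k:ℝ) * mk = 1 := by
      rw [hmk, ← Real.rpow_add hM0]; simp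
    have e3 : M ^ (k':ℝ) * mk' = 1 := by
      rw [hmk', ← Real.rpow_add hM0]; simp
    rw [e1]
    linear_combination (-(C x y) * M ^ ((k':ℝ)) * mk'
        + M ^ ((k':ℝ)) * (∫ w in Icc c d, C x w)) * e2
      + (-(C x y) + M ^ ((k:ℝ)) * (∫ u in Icc a b, C u y)) * e3
  -- bound the double integral
  have hFcont : Continuous fun p : ℝ × ℝ => C x y - C p.1 y - C x p.2 + C p.1 p.2 := by
    fun_prop
  have houter : |∫ u in Icc a b, ∫ w in Icc c d, (C x y - C u y - C x w + C u w)|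
      ≤ (B * mk * mk' * mk') * mk := by
    have hin : ∀ u ∈ Icc a b,
        ‖∫ w in Icc c d, (C x y - C u y - C x w + C u w)‖ ≤ B * mk * mk' * mk' := by
      intro u hu
      have := norm_setIntegral_le_of_norm_le_const (μ := volume)
        (s := Icc c d) (C := B * mk * mk')
        measure_Icc_lt_top
        (fun w hw => by rw [Real.norm_eq_abs]; exact hFbd u hu w hw)
      change _ ≤ _ * (volume (Icc c d)).toReal at this
      rw [hVcd] at this
      exact this
    have := norm_setIntegral_le_of_norm_le_const (μ := volume)
      (s := Icc a b) (C := B * mk * mk' * mk')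
      measure_Icc_lt_top hin
    change _ ≤ _ * (volume (Icc a b)).toReal at this
    rw [hVab, Real.norm_eq_abs] at this; exact this
  -- put everything together
  have hPQ : (0:ℝ) < M ^ ((k:ℝ) + (k':ℝ)) := Real.rpow_pos_of_pos hM0 _
  have hfinal : |doubleAvgDiff M k k' C x y| ≤ B * mk' * mk := by
    rw [hsplit, abs_mul, abs_of_pos hPQ]
    have := mul_le_mul_of_nonneg_left houter hPQ.le
    refine this.trans (le_of_eq ?_)
    have e4 : M ^ ((k:ℝ) + (k':ℝ)) * (mk * mk') = 1 := by
      rw [hmk, hmk', ← Real.rpow_add hM0, ← Real.rpow_add hM0,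
        show ((k:ℝ) + (k':ℝ)) + (-(k:ℝ) + -(k':ℝ)) = 0 by ring, Real.rpow_zero]
    calc M ^ ((k:ℝ) + (k':ℝ)) * (B * mk * mk' * mk' * mk)
        = (B * mk' * mk) * (M ^ ((k:ℝ) + (k':ℝ)) * (mk * mk')) := by ring
      _ = B * mk' * mk := by rw [e4, mul_one]
  refine hfinal.trans_eq ?_
  -- final algebra with exponents
  have hpowe : M ^ ((2 - 2*β) * (j:ℝ)) * (mk' * mk)
      = M ^ (-2 * β * (j:ℝ)) * M ^ (-((k:ℝ) - (j:ℝ))) * M ^ (-((k':ℝ) - (j:ℝ))) := by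
    rw [hmk, hmk', ← Real.rpow_add hM0, ← Real.rpow_add hM0, ← Real.rpow_add hM0,
      ← Real.rpow_add hM0]
    congr 1; ring
  rw [hBdef, div_mul_eq_mul_div, div_mul_eq_mul_div]
  congr 1
  linear_combination (A * 3 ^ r : ℝ) * hpowe
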